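/- For tanh(r) ≤ 1/2, the hyperbolic area of the region {z ∈ Ω : d(z, iℝ₊) ≤ r}, where Ω is the standard fundamental domain of SL(2,ℤ), equals 2 arctan(sinh r) + 2 sinh(r) · log(1/(2 tanh r)). -/

import Mathlib

set_option maxHeartbeats 1000000

open MeasureTheory

/-- The standard fundamental domain for `SL(2, ℤ)` acting on the upper half-plane. -/
def Omega : Set ℂ :=
  {z : ℂ | 0 < z.im ∧ 1 ≤ ‖z‖ ∧ -(1 / 2) < z.re ∧ z.re ≤ 1 / 2}

/-- The cone of points at hyperbolic distance at most `r` from the imaginary axis. -/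
def cone (r : ℝ) : Set ℂ :=
  {z : ℂ | 0 < z.im ∧ |Complex.arg z - Real.pi / 2| ≤ Real.arcsin (Real.tanh r)}

section Aux
open Real Set intervalIntegral


lemma sqrt_one_sub_tanh_sq (r : ℝ) : Real.sqrt (1 - Real.tanh r ^ 2) = 1 / Real.cosh r := by
  have hc : 0 < Real.cosh r := Real.cosh_pos r
  have : 1 - Real.tanh r ^ 2 = (1 / Real.cosh r) ^ 2 := by
    rw [Real.tanh_eq_sinh_div_cosh]
    have h2 := Real.cosh_sq_sub_sinh_sq r
    field_simp
    linarith
  rw [this, Real.sqrt_sq (by positivity)]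

lemma cone_mem_iff (r : ℝ) (hr : 0 < r) (z : ℂ) (hz : 0 < z.im) :
    |Complex.arg z - Real.pi / 2| ≤ Real.arcsin (Real.tanh r) ↔
      |z.re| ≤ z.im * Real.sinh r := by
  have hz0 : z ≠ 0 := fun h => by simp [h] at hz
  have habs : 0 < ‖z‖ := norm_pos_iff.mpr hz0
  have hθ0 : 0 ≤ Complex.arg z := Complex.arg_nonneg_iff.2 hz.le
  have hθpi : Complex.arg z < Real.pi := by
    rcases (Complex.arg_le_pi z).lt_or_eq with h | h
    · exact h
    · exact absurd (Complex.arg_eq_pi_iff.1 h).2 hz.ne'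
  have hθ0' : 0 < Complex.arg z := by
    rcases hθ0.lt_or_eq with h | h
    · exact h
    · exact absurd (Complex.arg_eq_zero_iff.1 h.symm).2 hz.ne'
  have hshp : 0 < Real.sinh r := Real.sinh_pos_iff.2 hr
  have hchp : 0 < Real.cosh r := Real.cosh_pos r
  have hslc : Real.sinh r < Real.cosh r := by nlinarith [Real.cosh_sq_sub_sinh_sq r]
  have htanh0 : 0 < Real.tanh r := by
    rw [Real.tanh_eq_sinh_div_cosh]; positivity
  have htanh1 : Real.tanh r < 1 := by
    rw [Real.tanh_eq_sinh_div_cosh, div_lt_one hchp]; exact hslc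
  set η := Real.arcsin (Real.tanh r) with hη
  have hη0 : 0 ≤ η := Real.arcsin_nonneg.2 htanh0.le
  have hηlt : η ≤ Real.pi / 2 := Real.arcsin_le_pi_div_two _
  have ht : |Complex.arg z - Real.pi / 2| ≤ Real.pi / 2 := by
    rw [abs_le]; constructor <;> [linarith; linarith [Real.pi_pos]]
  have key : |Complex.arg z - Real.pi / 2| ≤ η ↔ Real.cos η ≤ Real.cos |Complex.arg z - Real.pi / 2| := by
    constructor
    · intro h
      exact Real.cos_le_cos_of_nonneg_of_le_pi (abs_nonneg _) (by linarith [Real.pi_pos]) h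
    · intro h
      by_contra hcon
      push_neg at hcon
      have := Real.cos_lt_cos_of_nonneg_of_le_pi hη0 (by linarith [Real.pi_pos]) hcon
      linarith
  rw [key, Real.cos_abs]
  have hcosθ : Real.cos (Complex.arg z - Real.pi / 2) = z.im / ‖z‖ := by
    rw [← Real.cos_neg, neg_sub, Real.cos_pi_div_two_sub, Complex.sin_arg]
  have hcosη : Real.cos η = 1 / Real.cosh r := by
    rw [hη, Real.cos_arcsin, sqrt_one_sub_tanh_sq]
  rw [hcosθ, hcosη]
  have hch : 0 < Real.cosh r := Real.cosh_pos r
  rw [div_le_div_iff₀ hch habs, one_mul]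
  constructor
  · intro hle
    have hsq : ‖z‖ ^ 2 ≤ (z.im * Real.cosh r) ^ 2 := by
      apply pow_le_pow_left₀ habs.le hle
    rw [Complex.sq_norm, Complex.normSq_apply] at hsq
    have h2 : z.re ^ 2 ≤ (z.im * Real.sinh r) ^ 2 := by
      have hc2 : Real.cosh r ^ 2 - Real.sinh r ^ 2 = 1 := Real.cosh_sq_sub_sinh_sq r
      nlinarith [sq_nonneg z.im]
    calc |z.re| = Real.sqrt (z.re ^ 2) := (Real.sqrt_sq_eq_abs _).symm
      _ ≤ Real.sqrt ((z.im * Real.sinh r) ^ 2) := Real.sqrt_le_sqrt h2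
      _ = z.im * Real.sinh r := Real.sqrt_sq (mul_nonneg hz.le hshp.le)
  · intro hle
    have h2 : z.re ^ 2 ≤ (z.im * Real.sinh r) ^ 2 := by
      calc z.re ^ 2 = |z.re| ^ 2 := (sq_abs _).symm
        _ ≤ (z.im * Real.sinh r) ^ 2 := pow_le_pow_left₀ (abs_nonneg _) hle 2
    have hsq : ‖z‖ ^ 2 ≤ (z.im * Real.cosh r) ^ 2 := by
      rw [Complex.sq_norm, Complex.normSq_apply]
      have hc2 : Real.cosh r ^ 2 - Real.sinh r ^ 2 = 1 := Real.cosh_sq_sub_sinh_sq r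
      nlinarith
    calc ‖z‖ = Real.sqrt (‖z‖ ^ 2) := (Real.sqrt_sq habs.le).symm
      _ ≤ Real.sqrt ((z.im * Real.cosh r) ^ 2) := Real.sqrt_le_sqrt hsq
      _ = z.im * Real.cosh r := Real.sqrt_sq (by positivity)


lemma inv_sq_eq_rpow {y : ℝ} (hy : 0 < y) : 1 / y ^ 2 = y ^ (-2 : ℝ) := by
  rw [Real.rpow_neg hy.le, show ((2:ℝ)) = ((2:ℕ):ℝ) by norm_num, Real.rpow_natCast, one_div]

lemma integrableOn_inv_sq_Ici {c : ℝ} (hc : 0 < c) :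
    IntegrableOn (fun y : ℝ => 1 / y ^ 2) (Set.Ici c) := by
  rw [integrableOn_Ici_iff_integrableOn_Ioi]
  exact (integrableOn_Ioi_rpow_of_lt (show (-2:ℝ) < -1 by norm_num) hc).congr_fun
      (fun y hy => (inv_sq_eq_rpow (hc.trans hy)).symm) measurableSet_Ioi

lemma integral_inv_sq_Ici {c : ℝ} (hc : 0 < c) :
    ∫ y in Set.Ici c, 1 / y ^ 2 = 1 / c := by
  rw [MeasureTheory.integral_Ici_eq_integral_Ioi]
  rw [setIntegral_congr_fun measurableSet_Ioi (g := fun y : ℝ => y ^ (-2 : ℝ))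
    (fun y hy => inv_sq_eq_rpow (hc.trans hy))]
  rw [integral_Ioi_rpow_of_lt (by norm_num) hc]
  rw [show (-2:ℝ) + 1 = -1 by norm_num, Real.rpow_neg hc.le, Real.rpow_one]
  norm_num


noncomputable def lb (r : ℝ) (x : ℝ) : ℝ := max (Real.sqrt (1 - x ^ 2)) (|x| / Real.sinh r)

lemma lb_pos (r : ℝ) (x : ℝ) (hx : |x| ≤ 1 / 2) : Real.sqrt (3/4) ≤ lb r x := by
  have hx2 : x ^ 2 ≤ 1 / 4 := by nlinarith [sq_abs x, abs_nonneg x]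
  exact le_max_of_le_left (Real.sqrt_le_sqrt (by linarith))

lemma arcsin_tanh (r : ℝ) : Real.arcsin (Real.tanh r) = Real.arctan (Real.sinh r) := by
  rw [Real.arctan_eq_arcsin]
  congr 1
  rw [show (1:ℝ) + Real.sinh r ^ 2 = Real.cosh r ^ 2 by nlinarith [Real.cosh_sq_sub_sinh_sq r],
    Real.sqrt_sq (Real.cosh_pos r).le, Real.tanh_eq_sinh_div_cosh]

lemma outer_integral (r : ℝ) (hr : 0 < r) (h : Real.tanh r ≤ 1 / 2) :
    ∫ x in Set.Ioc (-(1/2) : ℝ) (1/2), 1 / lb r x =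
      2 * Real.arctan (Real.sinh r) + 2 * Real.sinh r * Real.log (1 / (2 * Real.tanh r)) := by
  have hshp : 0 < Real.sinh r := Real.sinh_pos_iff.2 hr
  have hchp : 0 < Real.cosh r := Real.cosh_pos r
  have hc2 : Real.cosh r ^ 2 - Real.sinh r ^ 2 = 1 := Real.cosh_sq_sub_sinh_sq r
  set s := Real.tanh r with hs
  clear_value s
  have hs0 : 0 < s := by
    rw [hs, Real.tanh_eq_sinh_div_cosh]; positivity
  have hsc : s * Real.cosh r = Real.sinh r := by
    rw [hs, Real.tanh_eq_sinh_div_cosh]; field_simp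
  have hlbcont : Continuous (lb r) :=
    (Real.continuous_sqrt.comp (by continuity)).max (continuous_abs.div_const _)
  have hcont : ContinuousOn (fun x => 1 / lb r x) (Set.Icc (-(1/2) : ℝ) (1/2)) := by
    refine ContinuousOn.div continuousOn_const hlbcont.continuousOn fun x hx => ?_
    exact ne_of_gt (lt_of_lt_of_le (by positivity) (lb_pos r x (abs_le.2 ⟨hx.1, hx.2⟩)))
  have hii : ∀ a b : ℝ, a ∈ Set.Icc (-(1/2):ℝ) (1/2) → b ∈ Set.Icc (-(1/2):ℝ) (1/2) →
      IntervalIntegrable (fun x => 1 / lb r x) volume a b := fun a b ha hb =>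
    (hcont.mono (Set.uIcc_subset_Icc ha hb)).intervalIntegrable
  have hmem1 : (-(1/2):ℝ) ∈ Set.Icc (-(1/2):ℝ) (1/2) := by constructor <;> norm_num
  have hmem2 : (1/2:ℝ) ∈ Set.Icc (-(1/2):ℝ) (1/2) := by constructor <;> norm_num
  have hmem3 : (-s) ∈ Set.Icc (-(1/2):ℝ) (1/2) := by constructor <;> [linarith; linarith]
  have hmem4 : s ∈ Set.Icc (-(1/2):ℝ) (1/2) := by constructor <;> [linarith; linarith]
  rw [← intervalIntegral.integral_of_le (by norm_num : (-(1/2):ℝ) ≤ 1/2)]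
  rw [← intervalIntegral.integral_add_adjacent_intervals (b := -s) (hii _ _ hmem1 hmem3)
      (hii _ _ hmem3 hmem2),
    ← intervalIntegral.integral_add_adjacent_intervals (a := -s) (b := s) (hii _ _ hmem3 hmem4)
      (hii _ _ hmem4 hmem2)]
  -- middle piece
  have hmid : ∫ x in (-s)..s, 1 / lb r x = 2 * Real.arcsin s := by
    have heq : Set.EqOn (fun x => 1 / lb r x) (fun x => 1 / Real.sqrt (1 - x ^ 2))
        (Set.uIcc (-s) s) := by
      intro x hx
      rw [Set.uIcc_of_le (by linarith)] at hx
      have hx2 : x ^ 2 ≤ s ^ 2 := by nlinarith [sq_abs x, abs_nonneg x, hx.1, hx.2]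
      have hmax : lb r x = Real.sqrt (1 - x ^ 2) := by
        refine max_eq_left ((Real.le_sqrt (by positivity) (by nlinarith)).2 ?_)
        rw [div_pow, div_le_iff₀ (by positivity), sq_abs]
        nlinarith
      simp only [lb] at hmax ⊢
      rw [hmax]
    rw [intervalIntegral.integral_congr heq]
    have hderiv : ∀ x ∈ Set.uIcc (-s) s,
        HasDerivAt Real.arcsin (1 / Real.sqrt (1 - x ^ 2)) x := by
      intro x hx
      rw [Set.uIcc_of_le (by linarith)] at hx
      exact Real.hasDerivAt_arcsin (by intro hc; rw [hc] at hx; linarith [hx.1])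
        (by intro hc; rw [hc] at hx; linarith [hx.2])
    have hint : IntervalIntegrable (fun x => 1 / Real.sqrt (1 - x ^ 2)) volume (-s) s := by
      apply ContinuousOn.intervalIntegrable
      refine ContinuousOn.div continuousOn_const
        (Real.continuous_sqrt.comp (by continuity)).continuousOn fun x hx => ?_
      rw [Set.uIcc_of_le (by linarith)] at hx
      have hx2 : x ^ 2 ≤ s ^ 2 := by nlinarith [hx.1, hx.2]
      exact ne_of_gt (Real.sqrt_pos.2 (by nlinarith))
    rw [intervalIntegral.integral_eq_sub_of_hasDerivAt hderiv hint, Real.arcsin_neg]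
    ring
  -- right piece
  have hrt : ∫ x in s..(1/2:ℝ), 1 / lb r x = Real.sinh r * Real.log ((1/2) / s) := by
    have heq : Set.EqOn (fun x => 1 / lb r x) (fun x => Real.sinh r * (1 / x))
        (Set.uIcc s (1/2:ℝ)) := by
      intro x hx
      rw [Set.uIcc_of_le (by linarith)] at hx
      have hx0 : 0 < x := lt_of_lt_of_le hs0 hx.1
      have hmax : lb r x = x / Real.sinh r := by
        have habs : |x| = x := abs_of_pos hx0
        rw [lb, habs]
        refine max_eq_right ((Real.sqrt_le_left (by positivity)).2 ?_)
        rw [div_pow, le_div_iff₀ (by positivity)]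
        have hsc2 : s^2 * Real.cosh r^2 = Real.sinh r^2 := by rw [← hsc]; ring
        have hx2 : s^2 ≤ x^2 := by nlinarith [hx.1, hs0]
        have hkey : Real.sinh r ^ 2 ≤ x^2 * Real.cosh r ^2 := by
          nlinarith [hsc2, hx2, sq_nonneg (Real.cosh r)]
        nlinarith [hkey, hc2, sq_nonneg x]
      simp only [hmax, one_div_div]
      rw [div_eq_mul_one_div]
    rw [intervalIntegral.integral_congr heq, intervalIntegral.integral_const_mul,
      integral_one_div (by
        intro hc
        rw [Set.uIcc_of_le (by linarith)] at hc
        linarith [hc.1])]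
  -- left piece
  have hlt : ∫ x in (-(1/2:ℝ))..(-s), 1 / lb r x = Real.sinh r * -Real.log ((-s) / (-(1/2))) := by
    have heq : Set.EqOn (fun x => 1 / lb r x) (fun x => Real.sinh r * -(1 / x))
        (Set.uIcc (-(1/2:ℝ)) (-s)) := by
      intro x hx
      rw [Set.uIcc_of_le (by linarith)] at hx
      have hx0 : x < 0 := lt_of_le_of_lt hx.2 (by linarith)
      have hmax : lb r x = -x / Real.sinh r := by
        have habs : |x| = -x := abs_of_neg hx0
        rw [lb, habs]
        refine max_eq_right ((Real.sqrt_le_left (div_nonneg (by linarith) hshp.le)).2 ?_)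
        rw [div_pow, le_div_iff₀ (by positivity)]
        have hsc2 : s^2 * Real.cosh r^2 = Real.sinh r^2 := by rw [← hsc]; ring
        have hx2 : s^2 ≤ x^2 := by nlinarith [hx.2, hs0]
        have hkey : Real.sinh r ^ 2 ≤ x^2 * Real.cosh r ^2 := by
          nlinarith [hsc2, hx2, sq_nonneg (Real.cosh r)]
        nlinarith [hkey, hc2, sq_nonneg x]
      simp only [hmax, one_div_div]
      rw [div_neg, mul_neg, mul_one_div]
    rw [intervalIntegral.integral_congr heq, intervalIntegral.integral_const_mul,
      intervalIntegral.integral_neg, integral_one_div (by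
        intro hc
        rw [Set.uIcc_of_le (by linarith)] at hc
        linarith [hc.2])]
  rw [hmid, hrt, hlt, ← arcsin_tanh, ← hs]
  have hlog1 : Real.log ((-s) / (-(1/2:ℝ))) = Real.log (2 * s) := by
    congr 1; field_simp
  have hlog2 : Real.log ((1/2:ℝ) / s) = Real.log (1 / (2 * s)) := by
    congr 1; field_simp
  have hlog3 : Real.log (1 / (2 * s)) = -Real.log (2 * s) := by
    rw [one_div, Real.log_inv]
  rw [hlog1, hlog2, hlog3]
  ring

lemma inter_eq (r : ℝ) (hr : 0 < r) :
    Omega ∩ cone r =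
      {z : ℂ | z.re ∈ Set.Ioc (-(1/2) : ℝ) (1/2) ∧ lb r z.re ≤ z.im} := by
  have hshp : 0 < Real.sinh r := Real.sinh_pos_iff.2 hr
  ext z
  simp only [Omega, cone, Set.mem_inter_iff, Set.mem_setOf_eq, Set.mem_Ioc]
  constructor
  · rintro ⟨⟨him, habs, hre1, hre2⟩, -, harg⟩
    refine ⟨⟨hre1, hre2⟩, ?_⟩
    have hx : |z.re| ≤ z.im * Real.sinh r := (cone_mem_iff r hr z him).1 harg
    have h1 : 1 ≤ z.re ^ 2 + z.im ^ 2 := by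
      have := Complex.sq_norm z
      rw [Complex.normSq_apply] at this
      nlinarith
    refine max_le ?_ ?_
    · calc Real.sqrt (1 - z.re ^ 2) ≤ Real.sqrt (z.im ^ 2) := Real.sqrt_le_sqrt (by linarith)
        _ = z.im := Real.sqrt_sq him.le
    · rwa [div_le_iff₀ hshp]
  · rintro ⟨⟨hre1, hre2⟩, hlb⟩
    have habs : |z.re| ≤ 1 / 2 := abs_le.2 ⟨by linarith, hre2⟩
    have him : 0 < z.im := lt_of_lt_of_le (by positivity) ((lb_pos r z.re habs).trans hlb)
    have hx2 : z.re ^ 2 ≤ 1 / 4 := by nlinarith [sq_abs z.re, abs_nonneg z.re]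
    have hsq : 1 - z.re ^ 2 ≤ z.im ^ 2 := by
      have h1 : Real.sqrt (1 - z.re ^ 2) ≤ z.im := le_trans (le_max_left _ _) hlb
      have := Real.sq_sqrt (show (0:ℝ) ≤ 1 - z.re ^ 2 by linarith)
      nlinarith [Real.sqrt_nonneg (1 - z.re ^ 2)]
    refine ⟨⟨him, ?_, hre1, hre2⟩, him, ?_⟩
    · rw [show (1:ℝ) = Real.sqrt 1 from (Real.sqrt_one).symm, Complex.norm_def]
      exact Real.sqrt_le_sqrt (by rw [Complex.normSq_apply]; nlinarith)
    · rw [cone_mem_iff r hr z him, ← div_le_iff₀ hshp]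
      exact le_trans (le_max_right _ _) hlb

lemma lb_continuous (r : ℝ) : Continuous (lb r) :=
  (Real.continuous_sqrt.comp (by continuity)).max (continuous_abs.div_const _)

lemma transfer (r : ℝ) :
    ∫ z in {z : ℂ | z.re ∈ Set.Ioc (-(1/2) : ℝ) (1/2) ∧ lb r z.re ≤ z.im}, (1 / z.im ^ 2) =
      ∫ x in Set.Ioc (-(1/2) : ℝ) (1/2), 1 / lb r x := by
  set S' : Set (ℝ × ℝ) := {p | p.1 ∈ Set.Ioc (-(1/2) : ℝ) (1/2) ∧ lb r p.1 ≤ p.2} with hS'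
  have hmeas : MeasurableSet S' := by
    have : S' = (Set.Ioc (-(1/2):ℝ) (1/2) ×ˢ Set.univ) ∩ {p : ℝ × ℝ | lb r p.1 ≤ p.2} := by
      ext p; simp [hS', Set.mem_prod]
    rw [this]
    exact (measurableSet_Ioc.prod MeasurableSet.univ).inter
      (measurableSet_le ((lb_continuous r).comp continuous_fst).measurable measurable_snd)
  have hpre : (Complex.measurableEquivRealProd.symm) ⁻¹' {z : ℂ | z.re ∈ Set.Ioc (-(1/2) : ℝ) (1/2) ∧ lb r z.re ≤ z.im} = S' := by
    ext p
    simp [hS', Complex.measurableEquivRealProd_symm_apply]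
  have step1 : ∫ z in {z : ℂ | z.re ∈ Set.Ioc (-(1/2) : ℝ) (1/2) ∧ lb r z.re ≤ z.im},
      (1 / z.im ^ 2) = ∫ p in S', 1 / p.2 ^ 2 := by
    rw [← (Complex.volume_preserving_equiv_real_prod.symm _).setIntegral_preimage_emb
      Complex.measurableEquivRealProd.symm.measurableEmbedding (fun z => 1 / z.im ^ 2) _, hpre]
    rfl
  rw [step1]
  -- integrability
  have hc : (0:ℝ) < Real.sqrt (3/4) := Real.sqrt_pos.2 (by norm_num)
  have hsub : S' ⊆ Set.Ioc (-(1/2):ℝ) (1/2) ×ˢ Set.Ici (Real.sqrt (3/4)) := by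
    rintro p ⟨hp1, hp2⟩
    exact ⟨hp1, (lb_pos r p.1 (abs_le.2 ⟨hp1.1.le, hp1.2⟩)).trans hp2⟩
  have hIR : IntegrableOn (fun p : ℝ × ℝ => 1 / p.2 ^ 2)
      (Set.Ioc (-(1/2):ℝ) (1/2) ×ˢ Set.Ici (Real.sqrt (3/4))) := by
    rw [IntegrableOn, Measure.volume_eq_prod, ← Measure.prod_restrict]
    have h1 : Integrable (fun _ : ℝ => (1:ℝ)) (volume.restrict (Set.Ioc (-(1/2):ℝ) (1/2))) := by
      rw [← IntegrableOn]
      exact integrableOn_const measure_Ioc_lt_top.ne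
    have := h1.mul_prod (integrableOn_inv_sq_Ici hc)
    simpa using this
  have hint : IntegrableOn (fun p : ℝ × ℝ => 1 / p.2 ^ 2) S' := hIR.mono_set hsub
  rw [← MeasureTheory.integral_indicator hmeas]
  have hindint : Integrable (S'.indicator fun p : ℝ × ℝ => 1 / p.2 ^ 2) :=
    hint.integrable_indicator hmeas
  rw [Measure.volume_eq_prod ℝ ℝ]
  rw [Measure.volume_eq_prod ℝ ℝ] at hindint
  rw [MeasureTheory.integral_prod _ hindint]
  have hinner : ∀ x : ℝ, (∫ y : ℝ, (S'.indicator fun p : ℝ × ℝ => 1 / p.2 ^ 2) (x, y)) =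
      (Set.Ioc (-(1/2):ℝ) (1/2)).indicator (fun x => 1 / lb r x) x := by
    intro x
    by_cases hx : x ∈ Set.Ioc (-(1/2):ℝ) (1/2)
    · have heq : ∀ y : ℝ, (S'.indicator fun p : ℝ × ℝ => 1 / p.2 ^ 2) (x, y) =
          (Set.Ici (lb r x)).indicator (fun y => 1 / y ^ 2) y := by
        intro y
        by_cases hy : lb r x ≤ y
        · rw [Set.indicator_of_mem (show (x, y) ∈ S' from ⟨hx, hy⟩),
            Set.indicator_of_mem (Set.mem_Ici.2 hy)]
        · rw [Set.indicator_of_notMem (fun hc : (x, y) ∈ S' => hy hc.2),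
            Set.indicator_of_notMem (fun hc => hy (Set.mem_Ici.1 hc))]
      rw [Set.indicator_of_mem hx]
      simp_rw [heq]
      rw [MeasureTheory.integral_indicator measurableSet_Ici,
        integral_inv_sq_Ici (lt_of_lt_of_le hc (lb_pos r x (abs_le.2 ⟨hx.1.le, hx.2⟩)))]
    · rw [Set.indicator_of_notMem hx]
      have heq : ∀ y : ℝ, (S'.indicator fun p : ℝ × ℝ => 1 / p.2 ^ 2) (x, y) = 0 := fun y =>
        Set.indicator_of_notMem (fun hc => hx hc.1) _
      simp_rw [heq, integral_zero]
  simp_rw [hinner]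
  rw [MeasureTheory.integral_indicator measurableSet_Ioc]

end Aux

theorem area_near_rectangular (r : ℝ) (hr : 0 < r) (h : Real.tanh r ≤ 1 / 2) :
    ∫ z in Omega ∩ cone r, (1 / z.im ^ 2) =
      2 * Real.arctan (Real.sinh r) + 2 * Real.sinh r * Real.log (1 / (2 * Real.tanh r)) := by
  rw [inter_eq r hr, transfer r, outer_integral r hr h]
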